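/- Let M = diag(μ_j) with μ_j ≥ 0 and ∑_j μ_j < ∞, Σ ⪰ (1/B)·I a positive semidefinite operator on ℓ², and λ > 0. Then trace( M^{1/2}(M^{1/2} Σ M^{1/2} + λI)^{−1} M^{1/2} ) ≤ ∑_{j=1}^∞ μ_j/(μ_j/B + λ). -/

import Mathlib

noncomputable abbrev H12 : Type := lp (fun _ : ℕ => ℝ) 2

/-- For M = diag(μ_j) with μ_j ≥ 0 trace-class, Σ ⪰ (1/B)·I positive
semidefinite, and λ > 0:
trace(M^{1/2}(M^{1/2} Σ M^{1/2} + λ I)^{-1} M^{1/2}) ≤ ∑_j μ_j/(μ_j/B + λ).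
The trace is the sum of diagonal entries in the standard basis. -/
theorem trace_resolvent_bound_of_lower
    (μ : ℕ → ℝ) (B lam : ℝ)
    (hμ : ∀ j, 0 ≤ μ j) (hμ_summable : Summable μ)
    (hB : 1 ≤ B) (hlam : 0 < lam)
    (Sig sqrtM Binv : H12 →L[ℝ] H12)
    -- M^{1/2} is the diagonal operator with entries √μ_j
    (hsqrtM : ∀ (v : H12) (j : ℕ), (sqrtM v) j = Real.sqrt (μ j) * v j)
    -- Σ is self-adjoint and Σ ⪰ (1/B)·I
    (hSig_sa : ∀ v w : H12, (inner ℝ (Sig v) w : ℝ) = inner ℝ v (Sig w))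
    (hSig_lb : ∀ v : H12, (1 / B) * ‖v‖ ^ 2 ≤ (inner ℝ v (Sig v) : ℝ))
    -- Binv is a two-sided inverse of M^{1/2} Σ M^{1/2} + λ I
    (hBinv_left : ∀ v : H12, Binv (sqrtM (Sig (sqrtM v)) + lam • v) = v)
    (hBinv_right : ∀ v : H12, sqrtM (Sig (sqrtM (Binv v))) + lam • Binv v = v) :
    (∑' j : ℕ, (sqrtM (Binv (sqrtM (lp.single 2 j (1 : ℝ))))) j)
      ≤ ∑' j : ℕ, μ j / (μ j / B + lam) := by
  have hB0 : (0:ℝ) < B := lt_of_lt_of_le one_pos hB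
  -- symmetry of sqrtM
  have hsym : ∀ x y : H12, (inner ℝ (sqrtM x) y : ℝ) = inner ℝ x (sqrtM y) := by
    intro x y
    rw [lp.inner_eq_tsum, lp.inner_eq_tsum]
    refine tsum_congr fun i => ?_
    simp only [RCLike.inner_apply, conj_trivial, hsqrtM]
    ring
  -- squared norm as tsum and pointwise lower bound
  have hnorm_sq : ∀ (x : H12) (j : ℕ), (x j) ^ 2 ≤ ‖x‖ ^ 2 := by
    intro x j
    have h1 : (inner ℝ x x : ℝ) = ∑' i, (x i) * (x i) := by
      rw [lp.inner_eq_tsum]; exact tsum_congr fun i => by simp [pow_two]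
    have h2 : Summable fun i => (x i) * (x i) := by
      have := lp.summable_inner (𝕜 := ℝ) x x
      simpa [pow_two] using this
    have h3 : (x j) * (x j) ≤ ∑' i, (x i) * (x i) :=
      Summable.le_tsum h2 j fun i _ => mul_self_nonneg _
    calc (x j) ^ 2 = (x j) * (x j) := pow_two (x j)
      _ ≤ ∑' i, (x i) * (x i) := h3
      _ = (inner ℝ x x : ℝ) := h1.symm
      _ = ‖x‖ ^ 2 := real_inner_self_eq_norm_sq x
  -- termwise bound
  have hterm : ∀ j : ℕ,
      (sqrtM (Binv (sqrtM (lp.single 2 j (1 : ℝ))))) j ≤ μ j / (μ j / B + lam) := by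
    intro j
    set u : H12 := sqrtM (lp.single 2 j (1:ℝ)) with hu
    set v : H12 := Binv u with hv
    set w : H12 := sqrtM v with hw
    have hc : 0 < μ j / B + lam := by
      have := div_nonneg (hμ j) hB0.le; linarith
    -- the term equals ⟪u, v⟫
    have hfj : (inner ℝ u v : ℝ) = (sqrtM v) j := by
      rw [hu, hsym, lp.inner_single_left]
      simp
    -- ⟪u, v⟫ = ⟪Sig w, w⟫ + lam * ‖v‖²
    have hAv : sqrtM (Sig w) + lam • v = u := hBinv_right u
    have hquad : (inner ℝ u v : ℝ) = (inner ℝ (Sig w) w : ℝ) + lam * ‖v‖ ^ 2 := by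
      rw [← hAv]
      rw [inner_add_left, real_inner_smul_left, hsym, real_inner_self_eq_norm_sq]
    have hlb : (μ j / B + lam) * (v j) ^ 2 ≤ (inner ℝ u v : ℝ) := by
      have h1 : (1 / B) * ‖w‖ ^ 2 ≤ (inner ℝ (Sig w) w : ℝ) := by
        rw [hSig_sa]; exact hSig_lb w
      have h2 : (w j) ^ 2 ≤ ‖w‖ ^ 2 := hnorm_sq w j
      have h3 : (v j) ^ 2 ≤ ‖v‖ ^ 2 := hnorm_sq v j
      have hwj : (w j) ^ 2 = μ j * (v j) ^ 2 := by
        rw [hw, hsqrtM, mul_pow, Real.sq_sqrt (hμ j)]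
      have hBinvpos : (0:ℝ) < 1 / B := by positivity
      have hA : (1/B) * (w j)^2 ≤ (1/B) * ‖w‖^2 :=
        mul_le_mul_of_nonneg_left h2 hBinvpos.le
      have hA' : lam * (v j)^2 ≤ lam * ‖v‖^2 :=
        mul_le_mul_of_nonneg_left h3 hlam.le
      have heq : μ j / B * (v j)^2 = 1/B * (w j)^2 := by rw [hwj]; ring
      rw [hquad]
      nlinarith
    -- now the scalar argument
    have hs : Real.sqrt (μ j) ^ 2 = μ j := Real.sq_sqrt (hμ j)
    have hvj : (sqrtM v) j = Real.sqrt (μ j) * v j := hsqrtM v j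
    rw [hfj, hvj] at hlb
    rw [hvj]
    set s := Real.sqrt (μ j)
    set t := v j
    rw [le_div_iff₀ hc]
    nlinarith [sq_nonneg (s - (μ j / B + lam) * t), Real.sqrt_nonneg (μ j),
      mul_le_mul_of_nonneg_left hlb hc.le, hs]
  -- summability of the RHS
  have hcpos : ∀ j, 0 < μ j / B + lam := fun j => by
    have := div_nonneg (hμ j) hB0.le; linarith
  have hRHS_nonneg : ∀ j, 0 ≤ μ j / (μ j / B + lam) := fun j =>
    div_nonneg (hμ j) (hcpos j).le
  have hRHS_sum : Summable fun j => μ j / (μ j / B + lam) := by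
    refine Summable.of_nonneg_of_le hRHS_nonneg (fun j => ?_) (hμ_summable.div_const lam)
    exact div_le_div_of_nonneg_left (hμ j) hlam
      (by have := div_nonneg (hμ j) hB0.le; linarith)
  by_cases hS : Summable fun j => (sqrtM (Binv (sqrtM (lp.single 2 j (1 : ℝ))))) j
  · exact Summable.tsum_le_tsum hterm hS hRHS_sum
  · rw [tsum_eq_zero_of_not_summable hS]
    exact tsum_nonneg hRHS_nonneg
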